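/- arXiv:2209.13429 — 2 statements merged into one kernel-verified Lean document; each statement's English description precedes it below -/
import Mathlib

section
/- Fix d ≥ 3, i ∈ [d], j ∈ [d]. With notation as below, (1/C(d-1,j-1)) · Σ_{S ⊆ [d]\{i}, |S|=j-1} e_S e_{S^c}ᵀ = ((j-1)/(d-1))·(𝟙-e_i)𝟙ᵀ − ((j-1)(j-2)/((d-1)(d-2)))·(𝟙-e_i)(𝟙-e_i)ᵀ − ((j-1)(d-j)/((d-1)(d-2)))·(I_d − e_i e_iᵀ). -/
open Finset Matrix

/-- The indicator vector of a subset S of [d]. -/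
def indVec (d : ℕ) (S : Finset (Fin d)) : Fin d → ℝ := fun k => if k ∈ S then 1 else 0

lemma countMem {α : Type*} [DecidableEq α] (A : Finset α) (m : ℕ) (k : α) (hk : k ∈ A) :
    ((A.powersetCard (m+1)).filter (fun S => k ∈ S)).card = (A.card - 1).choose m := by
  rw [← card_erase_of_mem hk, ← card_powersetCard]
  apply card_bij (fun S _ => S.erase k)
  · intro S hS
    simp only [mem_filter, mem_powersetCard] at hS
    simp only [mem_powersetCard]
    exact ⟨fun x hx => mem_erase.2 ⟨(mem_erase.1 hx).1, hS.1.1 (mem_erase.1 hx).2⟩,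
      by rw [card_erase_of_mem hS.2, hS.1.2]; rfl⟩
  · intro S hS T hT h
    simp only [mem_filter] at hS hT
    rw [← insert_erase hS.2, ← insert_erase hT.2, h]
  · intro T hT
    simp only [mem_powersetCard] at hT
    refine ⟨insert k T, ?_, ?_⟩
    · simp only [mem_filter, mem_powersetCard]
      refine ⟨⟨insert_subset hk (hT.1.trans (erase_subset _ _)), ?_⟩, mem_insert_self _ _⟩
      rw [card_insert_of_notMem (fun h => (mem_erase.1 (hT.1 h)).1 rfl), hT.2]
    · rw [erase_insert (fun h => (mem_erase.1 (hT.1 h)).1 rfl)]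

lemma sum_entry {d : ℕ} (P : Finset (Finset (Fin d))) (k l : Fin d) :
    ∑ S ∈ P, indVec d S k * indVec d Sᶜ l
      = ((P.filter (fun S => k ∈ S ∧ l ∉ S)).card : ℝ) := by
  rw [← Finset.sum_boole]
  apply Finset.sum_congr rfl
  intro S _
  simp only [indVec, Finset.mem_compl]
  split_ifs <;> simp_all


/-- (1/C(d-1,j-1)) Σ_{S ⊆ [d]\{i}, |S|=j-1} e_S e_{S^c}ᵀ
  = ((j-1)/(d-1))·(𝟙-e_i)𝟙ᵀ − ((j-1)(j-2)/((d-1)(d-2)))·(𝟙-e_i)(𝟙-e_i)ᵀ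
    − ((j-1)(d-j)/((d-1)(d-2)))·(I_d − e_i e_iᵀ). -/
theorem stmt_7 (d : ℕ) (hd : 3 ≤ d) (i : Fin d) (j : ℕ) (hj1 : 1 ≤ j) (hjd : j ≤ d) :
    (1 / ((d - 1).choose (j - 1) : ℝ)) •
        ∑ S ∈ (Finset.univ \ {i}).powersetCard (j - 1), vecMulVec (indVec d S) (indVec d Sᶜ)
      = (((j : ℝ) - 1) / ((d : ℝ) - 1)) •
          vecMulVec ((fun _ => 1) - indVec d {i}) (fun _ => 1)
        - ((((j : ℝ) - 1) * ((j : ℝ) - 2)) / (((d : ℝ) - 1) * ((d : ℝ) - 2))) •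
          vecMulVec ((fun _ => 1) - indVec d {i}) ((fun _ => 1) - indVec d {i})
        - ((((j : ℝ) - 1) * ((d : ℝ) - (j : ℝ))) / (((d : ℝ) - 1) * ((d : ℝ) - 2))) •
          ((1 : Matrix (Fin d) (Fin d) ℝ) - vecMulVec (indVec d {i}) (indVec d {i})) := by
  rcases Nat.lt_or_ge j 2 with hj2 | hj2
  · have hj : j = 1 := by omega
    subst hj
    ext k l
    simp [indVec, vecMulVec_apply, Matrix.smul_apply, Matrix.sub_apply, Matrix.sum_apply]
  · obtain ⟨nn, rfl⟩ : ∃ nn, j = nn + 2 := ⟨j - 2, by omega⟩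
    have hnn : nn + 2 ≤ d := hjd
    have hd1 : 1 ≤ d := by omega
    have hd2 : 2 ≤ d := by omega
    -- real versions of the key binomial identities
    have hc1pos : 0 < (d-1).choose (nn+1) := Nat.choose_pos (by omega)
    have hcast1 : ((d-1 : ℕ) : ℝ) = (d : ℝ) - 1 := by push_cast [Nat.cast_sub hd1]; ring
    have hcast2 : ((d-2 : ℕ) : ℝ) = (d : ℝ) - 2 := by push_cast [Nat.cast_sub hd2]; ring
    have hF1n : (d-2).choose nn * (d-1) = (d-1).choose (nn+1) * (nn+1) := by
      rw [show d-1 = (d-2)+1 by omega, mul_comm]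
      exact Nat.add_one_mul_choose_eq (d-2) nn
    have hF2n : (d-3).choose nn * (d-2) = (d-2).choose (nn+1) * (nn+1) := by
      rw [show d-2 = (d-3)+1 by omega, mul_comm]
      exact Nat.add_one_mul_choose_eq (d-3) nn
    have hPn : (d-1).choose (nn+1) = (d-2).choose nn + (d-2).choose (nn+1) := by
      rw [show d-1 = (d-2)+1 by omega]
      exact Nat.choose_succ_succ (d-2) nn
    have hF1 : ((d-2).choose nn : ℝ) * ((d:ℝ)-1) = ((d-1).choose (nn+1) : ℝ) * ((nn:ℝ)+1) := by
      rw [← hcast1]; exact_mod_cast congrArg (Nat.cast : ℕ → ℝ) hF1n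
    have hF2 : ((d-3).choose nn : ℝ) * ((d:ℝ)-2) = ((d-2).choose (nn+1) : ℝ) * ((nn:ℝ)+1) := by
      rw [← hcast2]; exact_mod_cast congrArg (Nat.cast : ℕ → ℝ) hF2n
    have hP : ((d-1).choose (nn+1) : ℝ) = ((d-2).choose nn : ℝ) + ((d-2).choose (nn+1) : ℝ) := by
      exact_mod_cast congrArg (Nat.cast : ℕ → ℝ) hPn
    have hc1ne : ((d-1).choose (nn+1) : ℝ) ≠ 0 := Nat.cast_ne_zero.2 hc1pos.ne'
    have hdne1 : (d:ℝ) - 1 ≠ 0 := by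
      have : (3:ℝ) ≤ d := by exact_mod_cast hd
      linarith
    have hdne2 : (d:ℝ) - 2 ≠ 0 := by
      have : (3:ℝ) ≤ d := by exact_mod_cast hd
      linarith
    have hAcard : (Finset.univ \ {i} : Finset (Fin d)).card = d - 1 := by
      rw [card_sdiff_of_subset (by simp)]; simp
    have hjm : nn + 2 - 1 = nn + 1 := rfl
    ext k l
    simp only [Matrix.smul_apply, Matrix.sub_apply, Matrix.sum_apply, vecMulVec_apply,
      smul_eq_mul, hjm]
    rw [sum_entry]
    have hjcast : ((nn + 2 : ℕ) : ℝ) = (nn : ℝ) + 2 := by push_cast; ring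
    by_cases hk : k = i
    · -- row i : everything vanishes
      have hz : (((Finset.univ \ {i} : Finset (Fin d)).powersetCard (nn+1)).filter
          (fun S => k ∈ S ∧ l ∉ S)) = ∅ := by
        rw [Finset.filter_eq_empty_iff]
        intro S hS
        simp only [mem_powersetCard] at hS
        intro ⟨hkS, _⟩
        have := hS.1 hkS
        simp [hk] at this
      rw [hz]
      by_cases hl' : l = i
      · simp [indVec, Matrix.one_apply, hk, hl']
      · have h1 : ¬ k = l := fun h => hl' (h.symm.trans hk)
        have h2 : ¬ i = l := fun h => hl' h.symm
        simp [indVec, Matrix.one_apply, hk, hl', h1, h2]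
    · by_cases hlk : l = k
      · -- diagonal, k ≠ i
        have hli : ¬ l = i := fun h => hk (hlk.symm.trans h)
        have hz : (((Finset.univ \ {i} : Finset (Fin d)).powersetCard (nn+1)).filter
            (fun S => k ∈ S ∧ l ∉ S)) = ∅ := by
          rw [Finset.filter_eq_empty_iff]; intro S _; rw [hlk]; tauto
        rw [hz]
        simp only [indVec, Pi.sub_apply, Matrix.one_apply, mem_singleton, if_neg hk,
          if_neg hli, if_pos hlk.symm, Finset.card_empty, Nat.cast_zero, hjcast]
        field_simp
        ring
      · by_cases hl : l = i
        · -- l = i, k ≠ i : count = C(d-2, nn)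
          have hkl' : ¬ k = l := fun h => hk (h.trans hl)
          have hc : (((Finset.univ \ {i} : Finset (Fin d)).powersetCard (nn+1)).filter
              (fun S => k ∈ S ∧ l ∉ S)).card = (d-2).choose nn := by
            have heq : (((Finset.univ \ {i} : Finset (Fin d)).powersetCard (nn+1)).filter
                (fun S => k ∈ S ∧ l ∉ S))
                = (((Finset.univ \ {i} : Finset (Fin d)).powersetCard (nn+1)).filter
                (fun S => k ∈ S)) := by
              apply Finset.filter_congr
              intro S hS
              simp only [mem_powersetCard] at hS
              have : l ∉ S := fun h => by simpa [hl] using hS.1 h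
              tauto
            rw [heq, countMem _ nn k (by simp [hk]), hAcard]
            congr 1
          rw [hc]
          simp only [indVec, Pi.sub_apply, Matrix.one_apply, mem_singleton, if_neg hk,
            if_pos hl, if_neg hkl', hjcast]
          field_simp
          linear_combination ((d:ℝ)-2) * hF1
        · -- generic: count = C(d-3, nn)
          have hc : (((Finset.univ \ {i} : Finset (Fin d)).powersetCard (nn+1)).filter
              (fun S => k ∈ S ∧ l ∉ S)).card = (d-3).choose nn := by
            have hk' : k ∈ (Finset.univ \ {i} : Finset (Fin d)).erase l := by
              refine Finset.mem_erase.2 ⟨fun h => hlk h.symm, by simp [hk]⟩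
            have heq : (((Finset.univ \ {i} : Finset (Fin d)).powersetCard (nn+1)).filter
                (fun S => k ∈ S ∧ l ∉ S))
                = ((((Finset.univ \ {i} : Finset (Fin d)).erase l).powersetCard (nn+1)).filter
                (fun S => k ∈ S)) := by
              ext S
              simp only [mem_filter, mem_powersetCard, Finset.subset_erase]
              tauto
            rw [heq, countMem _ nn k hk', card_erase_of_mem (by simp [hl]), hAcard]
            congr 1
          rw [hc]
          have hkl' : ¬ k = l := fun h => hlk h.symm
          simp only [indVec, Pi.sub_apply, Matrix.one_apply, mem_singleton, if_neg hk,
            if_neg hl, if_neg hkl', hjcast]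
          field_simp
          linear_combination (((d:ℝ)-1) * hF2 - ((nn:ℝ)+1) * ((d:ℝ)-1) * hP - ((nn:ℝ)+1) * hF1)
end

section
/- (Uniqueness of semivalues with matching sums) Let φ₁, φ₂ be attribution maps of the form φ_m(i; v) = Σ_{j=1}^d w_j^{(m)} Δ_j(i; v) (m=1,2) with weight vectors w^{(1)}, w^{(2)}. If Σ_{i=1}^d φ₁(i; v) = Σ_{i=1}^d φ₂(i; v) for every coalition function v : 2^{[d]} → ℝ with v(∅)=0, then w^{(1)} = w^{(2)}, and hence φ₁ = φ₂. -/
open Finset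

/-- Average marginal contribution of feature i over coalitions of size j (not containing i). -/
noncomputable def margContrib (d : ℕ) (v : Finset (Fin d) → ℝ) (j : ℕ) (i : Fin d) : ℝ :=
  (1 / ((d - 1).choose j : ℝ)) *
    ∑ S ∈ (Finset.univ \ {i}).powersetCard j, (v (insert i S) - v S)

/-- Weighted attribution with weight vector w. -/
noncomputable def phiW (d : ℕ) (w : Fin d → ℝ) (v : Finset (Fin d) → ℝ) (i : Fin d) : ℝ :=
  ∑ j : Fin d, w j * margContrib d v j.val i

lemma marg_ind (d : ℕ) (j0 j i : Fin d) :
    margContrib d (fun S => if j0.val < S.card then (1:ℝ) else 0) j.val i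
      = if j = j0 then 1 else 0 := by
  unfold margContrib
  have hcard : (Finset.univ \ {i} : Finset (Fin d)).card = d - 1 := by
    rw [Finset.card_sdiff_of_subset (by simp)]; simp
  have hterm : ∀ S ∈ (Finset.univ \ ({i} : Finset (Fin d))).powersetCard j.val,
      ((if j0.val < (insert i S).card then (1:ℝ) else 0) - (if j0.val < S.card then 1 else 0))
        = (if j = j0 then 1 else 0) := by
    intro S hS
    rw [Finset.mem_powersetCard] at hS
    have hi : i ∉ S := fun hmem => by
      have := hS.1 hmem; simp at this
    rw [Finset.card_insert_of_notMem hi, hS.2]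
    rcases eq_or_ne j j0 with he | hne
    · subst he; rw [if_pos (by omega), if_neg (by omega), if_pos rfl]; ring
    · have hv : j.val ≠ j0.val := fun hv => hne (Fin.ext hv)
      rcases lt_or_gt_of_ne hv with hlt | hgt
      · rw [if_neg (by omega), if_neg (by omega), if_neg hne]; ring
      · rw [if_pos (by omega), if_pos (by omega), if_neg hne]; ring
  rw [Finset.sum_congr rfl hterm, Finset.sum_const, Finset.card_powersetCard, hcard,
    nsmul_eq_mul]
  have hpos : 0 < (d - 1).choose j.val := Nat.choose_pos (by have := j.isLt; omega)
  have : ((d - 1).choose j.val : ℝ) ≠ 0 := by positivity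
  field_simp

lemma phiW_ind (d : ℕ) (w : Fin d → ℝ) (j0 i : Fin d) :
    phiW d w (fun S => if j0.val < S.card then (1:ℝ) else 0) i = w j0 := by
  unfold phiW
  have : ∀ j : Fin d, w j * margContrib d (fun S => if j0.val < S.card then (1:ℝ) else 0) j.val i
      = if j = j0 then w j else 0 := by
    intro j
    rw [marg_ind]
    by_cases hj : j = j0 <;> simp [hj]
  rw [Finset.sum_congr rfl (fun j _ => this j), Finset.sum_ite_eq' Finset.univ j0 w,
    if_pos (Finset.mem_univ _)]

/-- Uniqueness of semivalues with matching sums: if two weighted attributions have the same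
total sum for every coalition function vanishing at ∅, their weights are equal, and hence
the attributions coincide. -/
theorem stmt_13 (d : ℕ) (hd : 1 ≤ d) (w₁ w₂ : Fin d → ℝ)
    (h : ∀ v : Finset (Fin d) → ℝ, v ∅ = 0 →
      ∑ i : Fin d, phiW d w₁ v i = ∑ i : Fin d, phiW d w₂ v i) :
    w₁ = w₂ ∧ ∀ (v : Finset (Fin d) → ℝ) (i : Fin d), phiW d w₁ v i = phiW d w₂ v i := by
  have hw : w₁ = w₂ := by
    funext j0
    have h0 := h (fun S => if j0.val < S.card then (1:ℝ) else 0) (by simp)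
    simp only [phiW_ind, Finset.sum_const, Finset.card_univ, Fintype.card_fin,
      nsmul_eq_mul] at h0
    have hdne : (d : ℝ) ≠ 0 := by positivity
    exact mul_left_cancel₀ hdne h0
  exact ⟨hw, fun v i => by rw [hw]⟩
end
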